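/- Let F be the free group on generators y₀, y₁ and set y₋₁ = (y₀y₁)⁻¹. Then [y₀, y₁] ∉ [[y₋₁, y₀, y₁]]. (This element corresponds to the homotopy class of the Hopf fibration S³ → S², a generator of π₃(S²) ≅ ℤ.) -/

import Mathlib

open scoped commutatorElement

/-- The left-normed (left-ordered) commutator `[a, b₁, b₂, …, b_t] = [[…[[a,b₁],b₂]…],b_t]`,
where `[a,b] = aba⁻¹b⁻¹`. -/
def leftNormedCommutator {G : Type*} [Group G] : G → List G → G
  | a, [] => a
  | a, b :: l => leftNormedCommutator ⁅a, b⁆ l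

/-- The letter `(w i)^ε` for a sign `ε = ±1` (coded by a `Bool`). -/
def signedLetter {G : Type*} [Group G] {ι : Type*} (w : ι → G) : ι × Bool → G
  | (i, true) => w i
  | (i, false) => (w i)⁻¹

/-- The set of all left-normed commutators `[z₁^{ε₁}, …, z_t^{ε_t}]` with `εᵢ = ±1`,
`zᵢ ∈ {w i | i : ι}`, in which every letter `w i` occurs at least once. -/
def fatCommutatorSet {G : Type*} [Group G] {ι : Type*} (w : ι → G) : Set G :=
  { g | ∃ (z : ι × Bool) (l : List (ι × Bool)),
      (∀ i : ι, i ∈ ((z :: l).map Prod.fst)) ∧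
      g = leftNormedCommutator (signedLetter w z) (l.map (signedLetter w)) }

/-- `[[w₁, …, w_k]]`: the normal closure of the set of left-normed commutators with
(signed) entries from `{w i}` in which every `w i` appears at least once. -/
def fatCommutator {G : Type*} [Group G] {ι : Type*} (w : ι → G) : Subgroup G :=
  Subgroup.normalClosure (fatCommutatorSet w)

/-- The family of letters `y₋₁, y₀, …, y_{n-1}` in the free group `F` on `y₀, …, y_{n-1}`,
where `y₋₁ = (y₀ ⋯ y_{n-1})⁻¹`; the index `0 : Fin (n+1)` encodes `y₋₁` and `i+1`
encodes `yᵢ`. -/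
def wuLetter (n : ℕ) : Fin (n + 1) → FreeGroup (Fin n) :=
  Fin.cases ((List.ofFn fun i : Fin n => FreeGroup.of i).prod)⁻¹ fun i => FreeGroup.of i

/-! ### The integer Heisenberg group, nilpotent of class 2 -/

structure Heis where
  a : ℤ
  b : ℤ
  c : ℤ

namespace Heis

instance : Mul Heis := ⟨fun x y => ⟨x.a + y.a, x.b + y.b, x.c + y.c + x.a * y.b⟩⟩
instance : One Heis := ⟨⟨0, 0, 0⟩⟩
instance : Inv Heis := ⟨fun x => ⟨-x.a, -x.b, -x.c + x.a * x.b⟩⟩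

lemma mul_def (x y : Heis) :
    x * y = ⟨x.a + y.a, x.b + y.b, x.c + y.c + x.a * y.b⟩ := rfl
lemma one_def : (1 : Heis) = ⟨0, 0, 0⟩ := rfl
lemma inv_def (x : Heis) : x⁻¹ = ⟨-x.a, -x.b, -x.c + x.a * x.b⟩ := rfl

instance : Group Heis where
  mul_assoc x y z := by
    simp only [mul_def, Heis.mk.injEq]
    refine ⟨by ring, by ring, by ring⟩
  one_mul x := by simp only [mul_def, one_def]; cases x; simp
  mul_one x := by simp only [mul_def, one_def]; cases x; simp
  inv_mul_cancel x := by
    simp only [mul_def, inv_def, one_def, Heis.mk.injEq]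
    refine ⟨by ring, by ring, by ring⟩

/-- Heis is nilpotent of class 2: all triple commutators vanish. -/
lemma triple_comm (g h k : Heis) : ⁅⁅g, h⁆, k⁆ = 1 := by
  simp only [commutatorElement_def, mul_def, inv_def, one_def, Heis.mk.injEq]
  refine ⟨by ring, by ring, by ring⟩

end Heis

/-! ### Generic lemmas about left-normed commutators -/

lemma leftNormedCommutator_one {G : Type*} [Group G] (l : List G) :
    leftNormedCommutator (1 : G) l = 1 := by
  induction l with
  | nil => rfl
  | cons b t ih =>
      show leftNormedCommutator ⁅(1 : G), b⁆ t = 1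
      simpa [commutatorElement_def] using ih

lemma map_leftNormedCommutator {G H : Type*} [Group G] [Group H] (f : G →* H)
    (a : G) (l : List G) :
    f (leftNormedCommutator a l) = leftNormedCommutator (f a) (l.map f) := by
  induction l generalizing a with
  | nil => rfl
  | cons b t ih =>
      show f (leftNormedCommutator ⁅a, b⁆ t) = leftNormedCommutator ⁅f a, f b⁆ (t.map f)
      rw [ih, map_commutatorElement]

/-- In Heis, any left-normed commutator with at least two further entries is trivial. -/
lemma heis_lnc (x : Heis) (L : List Heis) (h : 2 ≤ L.length) :
    leftNormedCommutator x L = 1 := by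
  match L, h with
  | b :: c :: t, _ =>
      show leftNormedCommutator ⁅⁅x, b⁆, c⁆ t = 1
      rw [Heis.triple_comm]
      exact leftNormedCommutator_one t

/-- The homomorphism sending `y₀, y₁` to the standard Heisenberg generators. -/
def heisHom : FreeGroup (Fin 2) →* Heis :=
  FreeGroup.lift (fun i => if i = 0 then ⟨1, 0, 0⟩ else ⟨0, 1, 0⟩)

theorem hopf_not_mem :
    ⁅(FreeGroup.of 0 : FreeGroup (Fin 2)), FreeGroup.of 1⁆ ∉ fatCommutator (wuLetter 2) := by
  intro hmem
  have hker : fatCommutator (wuLetter 2) ≤ heisHom.ker := by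
    apply Subgroup.normalClosure_le_normal
    rintro g ⟨z, l, hall, rfl⟩
    have hlen : 3 ≤ ((z :: l).map Prod.fst).length := by
      have hsub : (Finset.univ : Finset (Fin 3)) ⊆ ((z :: l).map Prod.fst).toFinset :=
        fun i _ => List.mem_toFinset.2 (hall i)
      calc 3 = (Finset.univ : Finset (Fin 3)).card := by simp
        _ ≤ ((z :: l).map Prod.fst).toFinset.card := Finset.card_le_card hsub
        _ ≤ ((z :: l).map Prod.fst).length := List.toFinset_card_le _
    simp only [List.length_map, List.length_cons] at hlen
    simp only [SetLike.mem_coe, MonoidHom.mem_ker]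
    rw [map_leftNormedCommutator]
    apply heis_lnc
    simp only [List.length_map]
    omega
  have h1 := hker hmem
  rw [MonoidHom.mem_ker, map_commutatorElement] at h1
  have h0 : heisHom (FreeGroup.of 0) = ⟨1, 0, 0⟩ := by
    rw [heisHom, FreeGroup.lift_apply_of]; rfl
  have h1' : heisHom (FreeGroup.of 1) = ⟨0, 1, 0⟩ := by
    rw [heisHom, FreeGroup.lift_apply_of]; rfl
  rw [h0, h1'] at h1
  simp only [commutatorElement_def, Heis.mul_def, Heis.inv_def, Heis.one_def,
    Heis.mk.injEq] at h1
  omega
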